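/- Let V, W be finite-dimensional 𝔽₂-vector spaces with subspaces V₀ ⊆ V and W₀ ⊆ W. Then the number of injective 𝔽₂-linear maps f : V → W such that f(V₀) ⊆ W₀ and the induced map V/V₀ → W/W₀ is injective equals #Inj(V₀, W₀) · #Inj(V/V₀, W/W₀) · 2^{dim(V/V₀) · dim W₀}. -/

import Mathlib

/-- Counting morphisms in the category `𝒞` of pairs `(V₀ ⊆ V)` of finite-dimensional
`𝔽₂`-vector spaces: the number of injective linear maps `f : V → W` carrying `V₀` into `W₀`
whose induced map `V/V₀ → W/W₀` is injective (equivalently, with `f ⁻¹ (W₀) = V₀`) equals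
`#Inj(V₀, W₀) · #Inj(V/V₀, W/W₀) · 2 ^ (dim (V/V₀) · dim W₀)`. -/
theorem stmt6 (V W : Type) [AddCommGroup V] [Module (ZMod 2) V]
    [AddCommGroup W] [Module (ZMod 2) W]
    [FiniteDimensional (ZMod 2) V] [FiniteDimensional (ZMod 2) W]
    (V₀ : Submodule (ZMod 2) V) (W₀ : Submodule (ZMod 2) W) :
    Nat.card {f : V →ₗ[ZMod 2] W //
        Function.Injective f ∧ (∀ v ∈ V₀, f v ∈ W₀) ∧ (∀ v : V, f v ∈ W₀ → v ∈ V₀)} =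
      Nat.card {g : V₀ →ₗ[ZMod 2] W₀ // Function.Injective g} *
        Nat.card {h : (V ⧸ V₀) →ₗ[ZMod 2] (W ⧸ W₀) // Function.Injective h} *
        2 ^ (Module.finrank (ZMod 2) (V ⧸ V₀) * Module.finrank (ZMod 2) W₀) := by
  classical
  obtain ⟨s, hs⟩ := V₀.mkQ.exists_rightInverse_of_surjective
    (LinearMap.range_eq_top.2 V₀.mkQ_surjective)
  obtain ⟨t, ht⟩ := W₀.mkQ.exists_rightInverse_of_surjective
    (LinearMap.range_eq_top.2 W₀.mkQ_surjective)
  have hs' : ∀ x, V₀.mkQ (s x) = x := fun x => congrFun (congrArg DFunLike.coe hs) x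
  have ht' : ∀ x, W₀.mkQ (t x) = x := fun x => congrFun (congrArg DFunLike.coe ht) x
  -- projections
  have hpV : ∀ v : V, v - s (V₀.mkQ v) ∈ V₀ := by
    intro v
    rw [← Submodule.Quotient.mk_eq_zero V₀]
    show V₀.mkQ _ = 0
    rw [map_sub, hs', sub_self]
  have hpW : ∀ w : W, w - t (W₀.mkQ w) ∈ W₀ := by
    intro w
    rw [← Submodule.Quotient.mk_eq_zero W₀]
    show W₀.mkQ _ = 0
    rw [map_sub, ht', sub_self]
  set pV : V →ₗ[ZMod 2] V₀ :=
    (LinearMap.id - s ∘ₗ V₀.mkQ).codRestrict V₀ (by intro v; simpa using hpV v) with hpVdef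
  set r : W →ₗ[ZMod 2] W₀ :=
    (LinearMap.id - t ∘ₗ W₀.mkQ).codRestrict W₀ (by intro w; simpa using hpW w) with hrdef
  have pV_apply : ∀ v : V, (pV v : V) = v - s (V₀.mkQ v) := fun v => rfl
  have r_apply : ∀ w : W, (r w : W) = w - t (W₀.mkQ w) := fun w => rfl
  have mem_mkQ : ∀ v : V, v ∈ V₀ ↔ V₀.mkQ v = 0 := by
    intro v; rw [Submodule.mkQ_apply, Submodule.Quotient.mk_eq_zero]
  have memW_mkQ : ∀ w : W, w ∈ W₀ ↔ W₀.mkQ w = 0 := by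
    intro w; rw [Submodule.mkQ_apply, Submodule.Quotient.mk_eq_zero]
  have hW0 : ∀ w : W₀, W₀.mkQ (w : W) = 0 := fun w => (memW_mkQ _).1 w.2
  have e : {f : V →ₗ[ZMod 2] W //
        Function.Injective f ∧ (∀ v ∈ V₀, f v ∈ W₀) ∧ (∀ v : V, f v ∈ W₀ → v ∈ V₀)} ≃
      ({g : V₀ →ₗ[ZMod 2] W₀ // Function.Injective g} ×
        {h : (V ⧸ V₀) →ₗ[ZMod 2] (W ⧸ W₀) // Function.Injective h} ×
        ((V ⧸ V₀) →ₗ[ZMod 2] W₀)) :=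
  { toFun := fun ⟨f, hinj, hmap, hpre⟩ =>
      (⟨f.restrict hmap, by
          intro a b hab
          exact Subtype.ext (hinj (congrArg Subtype.val hab))⟩,
       ⟨Submodule.mapQ V₀ W₀ f (fun v hv => hmap v hv), by
          rw [← LinearMap.ker_eq_bot, LinearMap.ker_eq_bot']
          intro x hx
          obtain ⟨v, rfl⟩ := V₀.mkQ_surjective x
          rw [Submodule.mkQ_apply, Submodule.mapQ_apply] at hx
          rw [(mem_mkQ v).1 (hpre v ((Submodule.Quotient.mk_eq_zero _).1 hx))]⟩,
       r ∘ₗ f ∘ₗ s)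
    invFun := fun ⟨⟨g, hg⟩, ⟨h, hh⟩, k⟩ =>
      ⟨W₀.subtype ∘ₗ g ∘ₗ pV + t ∘ₗ h ∘ₗ V₀.mkQ + W₀.subtype ∘ₗ k ∘ₗ V₀.mkQ, by
        set f := W₀.subtype ∘ₗ g ∘ₗ pV + t ∘ₗ h ∘ₗ V₀.mkQ + W₀.subtype ∘ₗ k ∘ₗ V₀.mkQ with hf
        have hmap : ∀ v ∈ V₀, f v ∈ W₀ := by
          intro v hv
          have h0 : V₀.mkQ v = 0 := (mem_mkQ v).1 hv
          simp only [hf, LinearMap.add_apply, LinearMap.comp_apply, h0, map_zero,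
            add_zero, Submodule.subtype_apply]
          exact (g (pV v)).2
        have hpre : ∀ v : V, f v ∈ W₀ → v ∈ V₀ := by
          intro v hv
          have : W₀.mkQ (f v) = 0 := (memW_mkQ _).1 hv
          simp only [hf, LinearMap.add_apply, LinearMap.comp_apply, map_add,
            Submodule.subtype_apply, ht'] at this
          rw [hW0, hW0, zero_add, add_zero] at this
          exact (mem_mkQ v).2 (hh (by rw [this, map_zero]))
        refine ⟨?_, hmap, hpre⟩
        rw [← LinearMap.ker_eq_bot, LinearMap.ker_eq_bot']
        intro v hv
        have hv₀ : v ∈ V₀ := hpre v (by rw [hv]; exact W₀.zero_mem)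
        have h0 : V₀.mkQ v = 0 := (mem_mkQ v).1 hv₀
        have hpVv : pV v = ⟨v, hv₀⟩ := by
          apply Subtype.ext; rw [pV_apply, h0, map_zero, sub_zero]
        simp only [hf, LinearMap.add_apply, LinearMap.comp_apply, h0, map_zero,
          add_zero, Submodule.subtype_apply, hpVv] at hv
        have := hg (a₁ := ⟨v, hv₀⟩) (a₂ := 0) (by rw [map_zero]; exact Subtype.ext hv)
        exact congrArg Subtype.val this⟩
    left_inv := by
      rintro ⟨f, hinj, hmap, hpre⟩
      apply Subtype.ext
      refine LinearMap.ext fun v => ?_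
      simp only [LinearMap.add_apply, LinearMap.comp_apply, Submodule.subtype_apply]
      have h1 : (f.restrict hmap (pV v) : W) = f v - f (s (V₀.mkQ v)) := by
        show f (pV v : V) = _
        rw [pV_apply, map_sub]
      have h2 : Submodule.mapQ V₀ W₀ f (fun v hv => hmap v hv) (V₀.mkQ v)
          = W₀.mkQ (f v) := by
        rw [Submodule.mkQ_apply, Submodule.mapQ_apply, Submodule.mkQ_apply]
      have h3 : W₀.mkQ (f v) = W₀.mkQ (f (s (V₀.mkQ v))) := by
        rw [← sub_eq_zero, ← map_sub, ← map_sub, ← memW_mkQ]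
        exact hmap _ (hpV v)
      rw [h1, h2, h3, r_apply]
      abel
    right_inv := by
      rintro ⟨⟨g, hg⟩, ⟨h, hh⟩, k⟩
      set f := W₀.subtype ∘ₗ g ∘ₗ pV + t ∘ₗ h ∘ₗ V₀.mkQ + W₀.subtype ∘ₗ k ∘ₗ V₀.mkQ with hf
      refine Prod.ext ?_ (Prod.ext ?_ ?_)
      · apply Subtype.ext
        refine LinearMap.ext fun x => ?_
        apply Subtype.ext
        show f (x : V) = (g x : W)
        have h0 : V₀.mkQ (x : V) = 0 := (mem_mkQ _).1 x.2
        have hpVx : pV (x : V) = x := by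
          apply Subtype.ext; rw [pV_apply, h0, map_zero, sub_zero]
        simp only [hf, LinearMap.add_apply, LinearMap.comp_apply, h0, map_zero,
          add_zero, Submodule.subtype_apply, hpVx]
      · apply Subtype.ext
        refine LinearMap.ext fun x => ?_
        obtain ⟨v, rfl⟩ := V₀.mkQ_surjective x
        have hm : ∀ v ∈ V₀, f v ∈ W₀ := by
          intro v hv
          have h0 : V₀.mkQ v = 0 := (mem_mkQ v).1 hv
          simp only [hf, LinearMap.add_apply, LinearMap.comp_apply, h0, map_zero,
            add_zero, Submodule.subtype_apply]
          exact (g (pV v)).2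
        show Submodule.mapQ V₀ W₀ f (fun v hv => hm v hv) (V₀.mkQ v) = h (V₀.mkQ v)
        rw [Submodule.mkQ_apply, Submodule.mapQ_apply]
        show W₀.mkQ (f v) = _
        simp only [hf, LinearMap.add_apply, LinearMap.comp_apply, map_add,
          Submodule.subtype_apply, ht']
        rw [hW0, hW0, zero_add, add_zero, Submodule.mkQ_apply]
      · refine LinearMap.ext fun x => ?_
        apply Subtype.ext
        show (r (f (s x)) : W) = (k x : W)
        have h0 : pV (s x) = 0 := by
          apply Subtype.ext; rw [pV_apply, hs']
          simp
        have hfs : f (s x) = t (h x) + (k x : W) := by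
          simp only [hf, LinearMap.add_apply, LinearMap.comp_apply, h0, map_zero,
            Submodule.subtype_apply, hs', zero_add]
        rw [r_apply, hfs]
        have : W₀.mkQ (t (h x) + (k x : W)) = h x := by
          rw [map_add, ht', hW0, add_zero]
        rw [this]
        abel }
  haveI : Fintype ((V ⧸ V₀) →ₗ[ZMod 2] W₀) := @Fintype.ofFinite _ (Module.finite_of_finite (ZMod 2))
  rw [Nat.card_congr e, Nat.card_prod, Nat.card_prod, ← mul_assoc]
  congr 1
  have hc : Nat.card ((V ⧸ V₀) →ₗ[ZMod 2] W₀) = Fintype.card ((V ⧸ V₀) →ₗ[ZMod 2] W₀) :=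
    Nat.card_eq_fintype_card
  rw [hc, Module.card_eq_pow_finrank (K := ZMod 2), ZMod.card,
    Module.finrank_linearMap]
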